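/- Consider the state-based algorithm with parameters (ω, φ) and decidable predicate R. For every i ∈ ℕ, the i-th state sᵢ of any run started at s₀ = λn.none satisfies the invariant: for all n ∈ ℕ, if xₙ ∉ M[sᵢ] (i.e., sᵢ(n) = some p for some p ∈ ℕ), then ¬R(M[sᵢ]↾n ∪ {xₙ}, f[sᵢ](n)). -/
import Mathlib


-- A state is a function `ℕ → Option ℕ`; `s n = none` means `xₙ ∈ M[s]`, and
-- `s n = some p` means `xₙ ∉ M[s]` with recorded evidence `f[s](n) = p`.

/-- The finite set `M[s]↾n = M[s] ∩ {x_m | m < n}`. -/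
def StateSeg {X : Type*} [DecidableEq X] (x : ℕ → X) (s : ℕ → Option ℕ) (n : ℕ) : Finset X :=
  ((Finset.range n).filter fun m => s m = none).image x

instance decExistsLE (N : ℕ) (p : ℕ → Prop) [DecidablePred p] :
    Decidable (∃ m, m ≤ N ∧ p m) :=
  decidable_of_iff (∃ m, m < N + 1 ∧ p m) (by simp [Nat.lt_succ_iff])

/-- One step of the algorithm with parameters `(ω, φ)` and predicate `R`:
search for the least `n ≤ ω s` with `xₙ ∈ M[s]` and `¬R(M[s]↾n ∪ {xₙ}, φ s)`;
if none exists the state is final (the step returns `s` itself), otherwise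
keep `s` below `n`, record `φ s` at `n`, and put everything above `n` back into `M`. -/
def StateStep {X : Type*} [DecidableEq X] (x : ℕ → X) (R : Finset X → ℕ → Prop)
    [∀ A p, Decidable (R A p)] (ω φ : (ℕ → Option ℕ) → ℕ)
    (s : ℕ → Option ℕ) : ℕ → Option ℕ :=
  if h : ∃ m, m ≤ ω s ∧ s m = none ∧ ¬ R (StateSeg x s m ∪ {x m}) (φ s) then
    fun k => if k < Nat.find h then s k else if k = Nat.find h then some (φ s) else none
  else s

/-- The run of the algorithm started at the initial state `s₀ = λn.none`. -/
def StateRun {X : Type*} [DecidableEq X] (x : ℕ → X) (R : Finset X → ℕ → Prop)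
    [∀ A p, Decidable (R A p)] (ω φ : (ℕ → Option ℕ) → ℕ) : ℕ → ℕ → Option ℕ
  | 0 => fun _ => none
  | i + 1 => StateStep x R ω φ (StateRun x R ω φ i)

/-- A state is final (the algorithm terminates in it) if the search fails. -/
def StateFinal {X : Type*} [DecidableEq X] (x : ℕ → X) (R : Finset X → ℕ → Prop)
    (ω φ : (ℕ → Option ℕ) → ℕ) (s : ℕ → Option ℕ) : Prop :=
  ¬ ∃ m, m ≤ ω s ∧ s m = none ∧ ¬ R (StateSeg x s m ∪ {x m}) (φ s)

lemma StateSeg_congr {X : Type*} [DecidableEq X] (x : ℕ → X) (s t : ℕ → Option ℕ) (n : ℕ)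
    (h : ∀ m < n, s m = t m) : StateSeg x s n = StateSeg x t n := by
  unfold StateSeg
  congr 1
  apply Finset.filter_congr
  intro m hm
  rw [h m (Finset.mem_range.mp hm)]

/-- Invariant of the run: if `xₙ ∉ M[sᵢ]`, i.e. `sᵢ n = some p`, then
`¬R(M[sᵢ]↾n ∪ {xₙ}, f[sᵢ](n))`. -/
theorem stmt9 {X : Type*} [DecidableEq X] (x : ℕ → X) (R : Finset X → ℕ → Prop)
    [∀ A p, Decidable (R A p)] (ω φ : (ℕ → Option ℕ) → ℕ) :
    ∀ (i n : ℕ) (p : ℕ), StateRun x R ω φ i n = some p →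
      ¬ R (StateSeg x (StateRun x R ω φ i) n ∪ {x n}) p := by
  intro i
  induction i with
  | zero => intro n p hp; simp [StateRun] at hp
  | succ i ih =>
    intro n p hp
    have hstep : StateRun x R ω φ (i+1) = StateStep x R ω φ (StateRun x R ω φ i) := rfl
    set s := StateRun x R ω φ i with hs
    rw [hstep] at hp ⊢
    unfold StateStep at hp ⊢
    by_cases h : ∃ m, m ≤ ω s ∧ s m = none ∧ ¬ R (StateSeg x s m ∪ {x m}) (φ s)
    · simp only [dif_pos h] at hp ⊢
      set N := Nat.find h with hN
      have hseg : ∀ k ≤ N, StateSeg x (fun k => if k < N then s k else if k = N then some (φ s) else none) k = StateSeg x s k := by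
        intro k hk
        apply StateSeg_congr
        intro m hm
        simp [lt_of_lt_of_le hm hk]
      rcases lt_trichotomy n N with hn | hn | hn
      · rw [if_pos hn] at hp
        rw [hseg n (le_of_lt hn)]
        exact ih n p hp
      · subst hn
        rw [if_neg (lt_irrefl _), if_pos rfl] at hp
        obtain ⟨-, -, hR⟩ := Nat.find_spec h
        rw [hseg N le_rfl]
        rw [← Option.some.inj hp]
        exact hR
      · rw [if_neg (by omega), if_neg (by omega)] at hp
        exact absurd hp (by simp)
    · simp only [dif_neg h] at hp ⊢
      exact ih n p hp
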